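/- (Equilibrium margin inequality.) Suppose the game has a unique Nash equilibrium z* = (x*, y*), and let C = min{c_x, c_y} ∈ (0,1]. Then for every z = (x,y) ∈ Z = X × Y, max_{z'∈V*(Z)} F(z)ᵀ(z − z') ≥ C ‖z* − z‖₁, where V*(Z) = V*(X) × V*(Y). -/

import Mathlib

open Finset Filter Topology

noncomputable section

/-- Squared Euclidean norm on `ℝ^n`. -/
def sqnorm {n : ℕ} (z : Fin n → ℝ) : ℝ := ∑ i, (z i) ^ 2

/-- Euclidean (2-)norm on `ℝ^n`. -/
def norm2 {n : ℕ} (z : Fin n → ℝ) : ℝ := Real.sqrt (sqnorm z)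

/-- 1-norm on `ℝ^n`. -/
def norm1 {n : ℕ} (z : Fin n → ℝ) : ℝ := ∑ i, |z i|

/-- Dot product on `ℝ^n`. -/
def dotp {n : ℕ} (a b : Fin n → ℝ) : ℝ := ∑ i, a i * b i

/-- Treeplexes (Hoda et al.): probability simplexes, Cartesian products, and branching. -/
inductive IsTreeplex : {n : ℕ} → Set (Fin n → ℝ) → Prop
  | simplex (m : ℕ) :
      IsTreeplex {x : Fin (m + 1) → ℝ | (∀ i, 0 ≤ x i) ∧ (∑ i, x i) = 1}
  | prod {m k : ℕ} {S : Set (Fin m → ℝ)} {T : Set (Fin k → ℝ)} :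
      IsTreeplex S → IsTreeplex T →
      IsTreeplex {z : Fin (m + k) → ℝ | ∃ u ∈ S, ∃ v ∈ T, z = Fin.append u v}
  | branch {m k : ℕ} {S : Set (Fin m → ℝ)} {T : Set (Fin k → ℝ)} (i : Fin m) :
      IsTreeplex S → IsTreeplex T →
      IsTreeplex {z : Fin (m + k) → ℝ | ∃ u ∈ S, ∃ v ∈ T,
        z = Fin.append u (fun j => u i * v j)}

/-- A point `z = (x, y)` of the product space `ℝ^M × ℝ^N`. -/
abbrev Pt (M N : ℕ) := (Fin M → ℝ) × (Fin N → ℝ)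

def dotPt {M N : ℕ} (a b : Pt M N) : ℝ := dotp a.1 b.1 + dotp a.2 b.2

def sqnormPt {M N : ℕ} (z : Pt M N) : ℝ := sqnorm z.1 + sqnorm z.2

def norm2Pt {M N : ℕ} (z : Pt M N) : ℝ := Real.sqrt (sqnormPt z)

def norm1Pt {M N : ℕ} (z : Pt M N) : ℝ := norm1 z.1 + norm1 z.2

/-- The game operator `F(z) = (G y, -Gᵀ x)`. -/
def Fop {M N : ℕ} (G : Matrix (Fin M) (Fin N) ℝ) (z : Pt M N) : Pt M N :=
  (G.mulVec z.2, -(G.transpose.mulVec z.1))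

/-- Bregman divergence of `ψ` (via the Fréchet derivative). -/
def Dbreg {M N : ℕ} (ψ : Pt M N → ℝ) (u v : Pt M N) : ℝ :=
  ψ u - ψ v - fderiv ℝ ψ v (u - v)

/-- Bregman divergence on a single space. -/
def Dbreg1 {n : ℕ} (ψ : (Fin n → ℝ) → ℝ) (u v : Fin n → ℝ) : ℝ :=
  ψ u - ψ v - fderiv ℝ ψ v (u - v)

/-- Optimistic online mirror descent with Bregman-divergence function `D`,
step size `η`, iterates `z` and `zh` (the latter is `ẑ`), started from an
arbitrary `ẑ₁ = z₀ ∈ Z`. -/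
def IsOOMD {M N : ℕ} (G : Matrix (Fin M) (Fin N) ℝ) (Z : Set (Pt M N))
    (D : Pt M N → Pt M N → ℝ) (η : ℝ) (z zh : ℕ → Pt M N) : Prop :=
  z 0 ∈ Z ∧ zh 1 = z 0 ∧
  (∀ t : ℕ, 1 ≤ t → z t ∈ Z ∧
    ∀ w ∈ Z, η * dotPt (z t) (Fop G (z (t - 1))) + D (z t) (zh t) ≤
      η * dotPt w (Fop G (z (t - 1))) + D w (zh t)) ∧
  (∀ t : ℕ, 1 ≤ t → zh (t + 1) ∈ Z ∧
    ∀ w ∈ Z, η * dotPt (zh (t + 1)) (Fop G (z t)) + D (zh (t + 1)) (zh t) ≤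
      η * dotPt w (Fop G (z t)) + D w (zh t))

def maxPayoff {M N : ℕ} (G : Matrix (Fin M) (Fin N) ℝ) (Y : Set (Fin N → ℝ))
    (x : Fin M → ℝ) : ℝ :=
  sSup ((fun y => dotp x (G.mulVec y)) '' Y)

def minPayoff {M N : ℕ} (G : Matrix (Fin M) (Fin N) ℝ) (X : Set (Fin M → ℝ))
    (y : Fin N → ℝ) : ℝ :=
  sInf ((fun x => dotp x (G.mulVec y)) '' X)

/-- `X* = argmin_{x ∈ X} max_{y ∈ Y} xᵀGy`. -/
def Xstar {M N : ℕ} (G : Matrix (Fin M) (Fin N) ℝ) (X : Set (Fin M → ℝ))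
    (Y : Set (Fin N → ℝ)) : Set (Fin M → ℝ) :=
  {x ∈ X | ∀ x' ∈ X, maxPayoff G Y x ≤ maxPayoff G Y x'}

/-- `Y* = argmax_{y ∈ Y} min_{x ∈ X} xᵀGy`. -/
def Ystar {M N : ℕ} (G : Matrix (Fin M) (Fin N) ℝ) (X : Set (Fin M → ℝ))
    (Y : Set (Fin N → ℝ)) : Set (Fin N → ℝ) :=
  {y ∈ Y | ∀ y' ∈ Y, minPayoff G X y' ≤ minPayoff G X y}

/-- The set of Nash equilibria `Z* = X* × Y*`. -/
def NashSet {M N : ℕ} (G : Matrix (Fin M) (Fin N) ℝ) (X : Set (Fin M → ℝ))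
    (Y : Set (Fin N → ℝ)) : Set (Pt M N) :=
  (Xstar G X Y) ×ˢ (Ystar G X Y)

/-- Generalized KL divergence (Bregman divergence of the vanilla entropy),
with the convention `0 ln 0 = 0`. -/
def KLgen {n : ℕ} (u v : Fin n → ℝ) : ℝ :=
  ∑ i, (u i * Real.log (u i / v i) - u i + v i)

def KLgenPt {M N : ℕ} (u v : Pt M N) : ℝ := KLgen u.1 v.1 + KLgen u.2 v.2

/-- The combinatorial structure of a treeplex in sequence form: indices `Fin n`,
information sets `Fin K`, the information set `owner i = h(i)` of each index,
and the parent index `parent h = σ(h)` of each information set (`none` for the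
root convention `z_{σ(h)} = 1`), with an acyclicity witness. -/
structure TreeplexData (n K : ℕ) where
  owner : Fin n → Fin K
  parent : Fin K → Option (Fin n)
  rank : Fin K → ℕ
  parent_rank : ∀ (h : Fin K) (j : Fin n), parent h = some j → rank (owner j) < rank h

/-- `z_{σ(h)}`, with the convention that it is `1` when `h` has no parent. -/
def TreeplexData.parentVal {n K : ℕ} (T : TreeplexData n K) (z : Fin n → ℝ) (h : Fin K) : ℝ :=
  (T.parent h).elim 1 z

/-- The treeplex determined by `T`: `z ≥ 0` with `∑_{i ∈ Ω_h} z_i = z_{σ(h)}`. -/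
def TreeplexData.set {n K : ℕ} (T : TreeplexData n K) : Set (Fin n → ℝ) :=
  {z | (∀ i, 0 ≤ z i) ∧
    ∀ h : Fin K, (∑ i ∈ Finset.univ.filter (fun i => T.owner i = h), z i) = T.parentVal z h}

/-- `q_i = z_i / z_{p_i}`. -/
def TreeplexData.q {n K : ℕ} (T : TreeplexData n K) (z : Fin n → ℝ) (i : Fin n) : ℝ :=
  z i / T.parentVal z (T.owner i)

/-- The dilated entropy `Ψ^dil_α(z) = ∑_i α_{h(i)} z_i ln q_i`. -/
def dilEnt {n K : ℕ} (T : TreeplexData n K) (α : Fin K → ℝ) (z : Fin n → ℝ) : ℝ :=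
  ∑ i, α (T.owner i) * z i * Real.log (T.q z i)

/-- Bregman divergence of the dilated entropy:
`D(u, z) = ∑_i α_{h(i)} u_i ln(q^u_i / q^z_i)`, with `0 ln 0 = 0`. -/
def dilEntBreg {n K : ℕ} (T : TreeplexData n K) (α : Fin K → ℝ) (u z : Fin n → ℝ) : ℝ :=
  ∑ i, α (T.owner i) * u i * Real.log (T.q u i / T.q z i)

/-- Coordinates of a pair `z = (x, y)` indexed by `Fin M ⊕ Fin N`. -/
def coordsOf {M N : ℕ} (z : Pt M N) : Fin M ⊕ Fin N → ℝ := Sum.elim z.1 z.2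

/-- `V*(X) = {x ∈ X : supp(x) ⊆ supp(x*)}`. -/
def suppSubset {M : ℕ} (X : Set (Fin M → ℝ)) (xs : Fin M → ℝ) : Set (Fin M → ℝ) :=
  {x ∈ X | ∀ i, x i ≠ 0 → xs i ≠ 0}

/-- The value `max_{y ∈ V*(Y)} (x − x*)ᵀ G y / ‖x − x*‖₁`. -/
def cxVal {M N : ℕ} (G : Matrix (Fin M) (Fin N) ℝ) (Y : Set (Fin N → ℝ))
    (xs : Fin M → ℝ) (ys : Fin N → ℝ) (x : Fin M → ℝ) : ℝ :=
  sSup ((fun y => dotp (x - xs) (G.mulVec y)) '' suppSubset Y ys) / norm1 (x - xs)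

/-- The value `max_{x ∈ V*(X)} xᵀ G (y* − y) / ‖y* − y‖₁`. -/
def cyVal {M N : ℕ} (G : Matrix (Fin M) (Fin N) ℝ) (X : Set (Fin M → ℝ))
    (xs : Fin M → ℝ) (ys : Fin N → ℝ) (y : Fin N → ℝ) : ℝ :=
  sSup ((fun x => dotp x (G.mulVec (ys - y))) '' suppSubset X xs) / norm1 (ys - y)

/-- `c_x = min_{x ∈ X, x ≠ x*} cxVal x`. -/
def cx {M N : ℕ} (G : Matrix (Fin M) (Fin N) ℝ) (X : Set (Fin M → ℝ))
    (Y : Set (Fin N → ℝ)) (xs : Fin M → ℝ) (ys : Fin N → ℝ) : ℝ :=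
  sInf ((fun x => cxVal G Y xs ys x) '' {x ∈ X | x ≠ xs})

/-- `c_y = min_{y ∈ Y, y ≠ y*} cyVal y`. -/
def cy {M N : ℕ} (G : Matrix (Fin M) (Fin N) ℝ) (X : Set (Fin M → ℝ))
    (Y : Set (Fin N → ℝ)) (xs : Fin M → ℝ) (ys : Fin N → ℝ) : ℝ :=
  sInf ((fun y => cyVal G X xs ys y) '' {y ∈ Y | y ≠ ys})

/-! ### Auxiliary lemmas -/

lemma dotp_mulVec {M N : ℕ} (G : Matrix (Fin M) (Fin N) ℝ) (a : Fin M → ℝ) (b : Fin N → ℝ) :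
    dotp a (G.mulVec b) = ∑ i, ∑ j, a i * G i j * b j := by
  simp [dotp, Matrix.mulVec, dotProduct, Finset.mul_sum, mul_assoc]

lemma dotp_transpose {M N : ℕ} (G : Matrix (Fin M) (Fin N) ℝ) (a : Fin M → ℝ) (b : Fin N → ℝ) :
    dotp b (G.transpose.mulVec a) = dotp a (G.mulVec b) := by
  rw [dotp_mulVec, dotp_mulVec, Finset.sum_comm]
  refine Finset.sum_congr rfl fun i _ => Finset.sum_congr rfl fun j _ => ?_
  simp [Matrix.transpose_apply]; ring

lemma dotp_comm {n : ℕ} (a b : Fin n → ℝ) : dotp a b = dotp b a := by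
  simp [dotp, mul_comm]

lemma dotp_sub_left {n : ℕ} (a b c : Fin n → ℝ) : dotp (a - b) c = dotp a c - dotp b c := by
  simp [dotp, sub_mul, Finset.sum_sub_distrib]

lemma dotp_add_left {n : ℕ} (a b c : Fin n → ℝ) : dotp (a + b) c = dotp a c + dotp b c := by
  simp [dotp, add_mul, Finset.sum_add_distrib]

lemma dotp_sub_right {n : ℕ} (a b c : Fin n → ℝ) : dotp a (b - c) = dotp a b - dotp a c := by
  simp [dotp, mul_sub, Finset.sum_sub_distrib]

lemma dotp_neg_left {n : ℕ} (a b : Fin n → ℝ) : dotp (-a) b = -dotp a b := by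
  simp [dotp]

lemma dotp_smul_left {n : ℕ} (t : ℝ) (a b : Fin n → ℝ) : dotp (t • a) b = t * dotp a b := by
  simp [dotp, Finset.mul_sum, mul_assoc]

lemma dotp_zero_left {n : ℕ} (b : Fin n → ℝ) : dotp 0 b = 0 := by simp [dotp]

lemma mulVec_sub {M N : ℕ} (G : Matrix (Fin M) (Fin N) ℝ) (b c : Fin N → ℝ) :
    G.mulVec (b - c) = G.mulVec b - G.mulVec c := by
  ext i; simp [Matrix.mulVec, dotProduct, mul_sub, Finset.sum_sub_distrib]

lemma abs_dotp_mulVec_le {M N : ℕ} {G : Matrix (Fin M) (Fin N) ℝ} (hG : ∀ i j, |G i j| ≤ 1)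
    (a : Fin M → ℝ) (b : Fin N → ℝ) :
    |dotp a (G.mulVec b)| ≤ norm1 a * norm1 b := by
  rw [dotp_mulVec]
  calc |∑ i, ∑ j, a i * G i j * b j| ≤ ∑ i, ∑ j, |a i * G i j * b j| := by
        refine (Finset.abs_sum_le_sum_abs _ _).trans ?_
        exact Finset.sum_le_sum fun i _ => Finset.abs_sum_le_sum_abs _ _
    _ ≤ ∑ i, ∑ j, |a i| * |b j| := by
        refine Finset.sum_le_sum fun i _ => Finset.sum_le_sum fun j _ => ?_
        rw [abs_mul, abs_mul]
        calc |a i| * |G i j| * |b j| ≤ |a i| * 1 * |b j| := by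
              have := hG i j
              have h1 : (0:ℝ) ≤ |a i| := abs_nonneg _
              have h2 : (0:ℝ) ≤ |b j| := abs_nonneg _
              have h3 : (0:ℝ) ≤ |a i| * |b j| := mul_nonneg h1 h2
              nlinarith [mul_le_mul_of_nonneg_left this h1, abs_nonneg (G i j)]
          _ = |a i| * |b j| := by ring
    _ = norm1 a * norm1 b := by rw [norm1, norm1, Finset.sum_mul_sum]

lemma norm1_nonneg {n : ℕ} (a : Fin n → ℝ) : 0 ≤ norm1 a :=
  Finset.sum_nonneg fun i _ => abs_nonneg _

lemma norm1_pos_of_ne {n : ℕ} {a b : Fin n → ℝ} (h : a ≠ b) : 0 < norm1 (a - b) := by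
  rcases (norm1_nonneg (a - b)).lt_or_eq with h' | h'
  · exact h'
  · exfalso; apply h; funext i
    have := (Finset.sum_eq_zero_iff_of_nonneg (fun i _ => abs_nonneg ((a - b) i))).1 h'.symm
    have hi := this i (Finset.mem_univ i)
    have : a i - b i = 0 := abs_eq_zero.1 hi
    linarith

lemma norm1_sub_comm {n : ℕ} (a b : Fin n → ℝ) : norm1 (a - b) = norm1 (b - a) := by
  unfold norm1; refine Finset.sum_congr rfl fun i _ => ?_
  simp [abs_sub_comm]

lemma IsTreeplex.nonempty {n : ℕ} {S : Set (Fin n → ℝ)} (h : IsTreeplex S) : S.Nonempty := by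
  induction h with
  | simplex m =>
      refine ⟨fun _ => (m + 1 : ℝ)⁻¹, fun i => by positivity, ?_⟩
      rw [Finset.sum_const, Finset.card_univ, Fintype.card_fin, nsmul_eq_mul]
      field_simp
      push_cast
      ring
  | prod hS hT ihS ihT =>
      obtain ⟨u, hu⟩ := ihS; obtain ⟨v, hv⟩ := ihT
      exact ⟨_, u, hu, v, hv, rfl⟩
  | branch i hS hT ihS ihT =>
      obtain ⟨u, hu⟩ := ihS; obtain ⟨v, hv⟩ := ihT
      exact ⟨_, u, hu, v, hv, rfl⟩

lemma IsTreeplex.coords {n : ℕ} {S : Set (Fin n → ℝ)} (h : IsTreeplex S) :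
    ∀ z ∈ S, ∀ i, 0 ≤ z i ∧ z i ≤ 1 := by
  induction h with
  | simplex m =>
      rintro z ⟨h0, h1⟩ i
      refine ⟨h0 i, ?_⟩
      calc z i ≤ ∑ j, z j := Finset.single_le_sum (fun j _ => h0 j) (Finset.mem_univ i)
        _ = 1 := h1
  | prod hS hT ihS ihT =>
      rintro z ⟨u, hu, v, hv, rfl⟩ i
      refine Fin.addCases (fun i => ?_) (fun i => ?_) i
      · rw [Fin.append_left]; exact ihS u hu i
      · rw [Fin.append_right]; exact ihT v hv i
  | branch i0 hS hT ihS ihT =>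
      rintro z ⟨u, hu, v, hv, rfl⟩ i
      refine Fin.addCases (fun i => ?_) (fun i => ?_) i
      · rw [Fin.append_left]; exact ihS u hu i
      · rw [Fin.append_right]
        obtain ⟨ha, hb⟩ := ihS u hu i0
        obtain ⟨hc, hd⟩ := ihT v hv i
        exact ⟨mul_nonneg ha hc, by nlinarith⟩

lemma append_comb {m k : ℕ} (a b : ℝ) (u1 u2 : Fin m → ℝ) (v1 v2 : Fin k → ℝ) :
    a • Fin.append u1 v1 + b • Fin.append u2 v2
      = Fin.append (a • u1 + b • u2) (a • v1 + b • v2) := by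
  funext i
  refine Fin.addCases (fun i => ?_) (fun i => ?_) i <;>
    simp [Fin.append_left, Fin.append_right]

lemma IsTreeplex.convex {n : ℕ} {S : Set (Fin n → ℝ)} (h : IsTreeplex S) : Convex ℝ S := by
  induction h with
  | simplex m => exact convex_stdSimplex ℝ _
  | prod hS hT ihS ihT =>
      rintro z1 ⟨u1, hu1, v1, hv1, rfl⟩ z2 ⟨u2, hu2, v2, hv2, rfl⟩ a b ha hb hab
      exact ⟨a • u1 + b • u2, ihS hu1 hu2 ha hb hab,
             a • v1 + b • v2, ihT hv1 hv2 ha hb hab, (append_comb a b u1 u2 v1 v2).symm ▸ rfl⟩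
  | branch i0 hS hT ihS ihT =>
      rintro z1 ⟨u1, hu1, v1, hv1, rfl⟩ z2 ⟨u2, hu2, v2, hv2, rfl⟩ a b ha hb hab
      set w : Fin _ → ℝ := a • u1 + b • u2 with hw
      have hwS : w ∈ _ := ihS hu1 hu2 ha hb hab
      by_cases hwi : w i0 = 0
      · obtain ⟨v0, hv0⟩ := hT.nonempty
        refine ⟨w, hwS, v0, hv0, ?_⟩
        have h1 : a * u1 i0 = 0 ∧ b * u2 i0 = 0 := by
          have e : a * u1 i0 + b * u2 i0 = 0 := by simpa [hw] using hwi
          have p1 : 0 ≤ a * u1 i0 := mul_nonneg ha (hS.coords u1 hu1 i0).1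
          have p2 : 0 ≤ b * u2 i0 := mul_nonneg hb (hS.coords u2 hu2 i0).1
          constructor <;> linarith
        rw [append_comb]
        have h2 : (a • fun j => u1 i0 * v1 j) + (b • fun j => u2 i0 * v2 j)
            = (fun j => w i0 * v0 j) := by
          funext j
          simp only [Pi.add_apply, Pi.smul_apply, smul_eq_mul, hwi, zero_mul]
          rw [← mul_assoc, ← mul_assoc, h1.1, h1.2]; ring
        rw [h2]
      · have p1 : 0 ≤ a * u1 i0 := mul_nonneg ha (hS.coords u1 hu1 i0).1
        have p2 : 0 ≤ b * u2 i0 := mul_nonneg hb (hS.coords u2 hu2 i0).1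
        have hsum : a * u1 i0 + b * u2 i0 = w i0 := by simp [hw]
        have hwpos : 0 < w i0 := by
          rcases (lt_or_eq_of_le (by linarith : (0:ℝ) ≤ w i0)) with h' | h'
          · exact h'
          · exact absurd h'.symm hwi
        set v3 : Fin _ → ℝ :=
          ((w i0)⁻¹ * (a * u1 i0)) • v1 + ((w i0)⁻¹ * (b * u2 i0)) • v2 with hv3
        have hv3T : v3 ∈ _ := ihT hv1 hv2
          (mul_nonneg (by positivity) p1) (mul_nonneg (by positivity) p2)
          (by field_simp; linarith)
        refine ⟨w, hwS, v3, hv3T, ?_⟩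
        rw [append_comb]
        have h2 : (a • fun j => u1 i0 * v1 j) + (b • fun j => u2 i0 * v2 j)
            = (fun j => w i0 * v3 j) := by
          funext j
          simp only [hv3, Pi.add_apply, Pi.smul_apply, smul_eq_mul]
          have : w i0 ≠ 0 := hwi
          field_simp
        rw [h2]

lemma IsTreeplex.isCompact {n : ℕ} {S : Set (Fin n → ℝ)} (h : IsTreeplex S) : IsCompact S := by
  induction h with
  | simplex m => exact isCompact_stdSimplex ℝ _
  | @prod m k S T hS hT ihS ihT =>
      have hset : {z : Fin (m+k) → ℝ | ∃ u ∈ S, ∃ v ∈ T, z = Fin.append u v}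
          = (fun p : (Fin m → ℝ) × (Fin k → ℝ) => Fin.append p.1 p.2) '' (S ×ˢ T) := by
        ext z
        constructor
        · rintro ⟨u, hu, v, hv, rfl⟩; exact ⟨(u, v), ⟨hu, hv⟩, rfl⟩
        · rintro ⟨⟨u, v⟩, ⟨hu, hv⟩, rfl⟩; exact ⟨u, hu, v, hv, rfl⟩
      rw [hset]
      refine (ihS.prod ihT).image ?_
      refine continuous_pi fun j => ?_
      refine Fin.addCases (motive := fun j =>
        Continuous fun p : (Fin m → ℝ) × (Fin k → ℝ) => Fin.append p.1 p.2 j)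
        (fun i => ?_) (fun i => ?_) j
      · simp only [Fin.append_left]; exact (continuous_apply i).comp continuous_fst
      · simp only [Fin.append_right]; exact (continuous_apply i).comp continuous_snd
  | @branch m k S T i0 hS hT ihS ihT =>
      have hset : {z : Fin (m+k) → ℝ | ∃ u ∈ S, ∃ v ∈ T, z = Fin.append u fun j => u i0 * v j}
          = (fun p : (Fin m → ℝ) × (Fin k → ℝ) =>
              Fin.append p.1 (fun j => p.1 i0 * p.2 j)) '' (S ×ˢ T) := by
        ext z
        constructor
        · rintro ⟨u, hu, v, hv, rfl⟩; exact ⟨(u, v), ⟨hu, hv⟩, rfl⟩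
        · rintro ⟨⟨u, v⟩, ⟨hu, hv⟩, rfl⟩; exact ⟨u, hu, v, hv, rfl⟩
      rw [hset]
      refine (ihS.prod ihT).image ?_
      refine continuous_pi fun j => ?_
      refine Fin.addCases (motive := fun j =>
        Continuous fun p : (Fin m → ℝ) × (Fin k → ℝ) =>
          Fin.append p.1 (fun j => p.1 i0 * p.2 j) j)
        (fun i => ?_) (fun i => ?_) j
      · simp only [Fin.append_left]; exact (continuous_apply i).comp continuous_fst
      · simp only [Fin.append_right]
        exact ((continuous_apply i0).comp continuous_fst).mul
          ((continuous_apply i).comp continuous_snd)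

lemma IsTreeplex.perturb {n : ℕ} {S : Set (Fin n → ℝ)} (h : IsTreeplex S) :
    ∀ zs ∈ S, ∀ z' ∈ S, (∀ i, z' i ≠ 0 → zs i ≠ 0) →
      ∃ ε > 0, ∀ η : ℝ, 0 ≤ η → η ≤ ε →
        (fun i => zs i + η * (zs i - z' i)) ∈ S := by
  induction h with
  | simplex m =>
      rintro zs ⟨hz0, hz1⟩ z' ⟨hz0', hz1'⟩ hsupp
      have hex : ∃ i, 0 < zs i := by
        by_contra hc
        push_neg at hc
        have : ∀ i ∈ Finset.univ, zs i = 0 := fun i _ => le_antisymm (hc i) (hz0 i)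
        rw [Finset.sum_eq_zero this] at hz1
        norm_num at hz1
      obtain ⟨i0, hi0⟩ := hex
      have hTne : (Finset.univ.filter (fun i => 0 < zs i)).Nonempty :=
        ⟨i0, by simp [hi0]⟩
      set ε := (Finset.univ.filter (fun i => 0 < zs i)).inf' hTne zs with hε
      have hεpos : 0 < ε := by
        rw [hε, Finset.lt_inf'_iff]
        intro b hb
        exact (Finset.mem_filter.1 hb).2
      refine ⟨ε, hεpos, fun η hη0 hηε => ⟨fun i => ?_, ?_⟩⟩
      · by_cases hzi : zs i = 0
        · have : z' i = 0 := by
            by_contra hne; exact (hsupp i hne) hzi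
          simp [hzi, this]
        · have hzpos : 0 < zs i := lt_of_le_of_ne (hz0 i) (Ne.symm hzi)
          have hle : ε ≤ zs i := Finset.inf'_le _ (by simp [hzpos])
          have hz'le : z' i ≤ 1 := by
            calc z' i ≤ ∑ j, z' j :=
              Finset.single_le_sum (fun j _ => hz0' j) (Finset.mem_univ i)
            _ = 1 := hz1'
          have h5 : η * z' i ≤ η := by nlinarith [hz0' i]
          have h6 : 0 ≤ η * zs i := mul_nonneg hη0 (le_of_lt hzpos)
          show 0 ≤ zs i + η * (zs i - z' i)
          nlinarith
      · have heq : ∑ i, (zs i + η * (zs i - z' i))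
            = (∑ i, zs i) + η * ((∑ i, zs i) - ∑ i, z' i) := by
          rw [Finset.sum_add_distrib, mul_sub, Finset.mul_sum, Finset.mul_sum,
            ← Finset.sum_sub_distrib]
          congr 1
          refine Finset.sum_congr rfl fun i _ => by ring
        show ∑ i, (zs i + η * (zs i - z' i)) = 1
        rw [heq, hz1, hz1']
        ring
  | @prod m k S T hS hT ihS ihT =>
      rintro zs ⟨u1, hu1, v1, hv1, rfl⟩ z' ⟨u2, hu2, v2, hv2, rfl⟩ hsupp
      have hsupp1 : ∀ i, u2 i ≠ 0 → u1 i ≠ 0 := by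
        intro i hne
        have h := hsupp (Fin.castAdd k i)
        rw [Fin.append_left, Fin.append_left] at h
        exact h hne
      have hsupp2 : ∀ i, v2 i ≠ 0 → v1 i ≠ 0 := by
        intro i hne
        have h := hsupp (Fin.natAdd m i)
        rw [Fin.append_right, Fin.append_right] at h
        exact h hne
      obtain ⟨ε1, hε1, h1⟩ := ihS u1 hu1 u2 hu2 hsupp1
      obtain ⟨ε2, hε2, h2⟩ := ihT v1 hv1 v2 hv2 hsupp2
      refine ⟨min ε1 ε2, lt_min hε1 hε2, fun η hη0 hηε => ?_⟩
      refine ⟨_, h1 η hη0 (hηε.trans (min_le_left _ _)),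
              _, h2 η hη0 (hηε.trans (min_le_right _ _)), ?_⟩
      funext i
      refine Fin.addCases (fun i => ?_) (fun i => ?_) i <;>
        simp [Fin.append_left, Fin.append_right]
  | @branch m k S T i0 hS hT ihS ihT =>
      rintro zs ⟨u1, hu1, v1, hv1, rfl⟩ z' ⟨u2, hu2, v2, hv2, rfl⟩ hsupp
      have hsupp1 : ∀ i, u2 i ≠ 0 → u1 i ≠ 0 := by
        intro i hne
        have h := hsupp (Fin.castAdd k i)
        rw [Fin.append_left, Fin.append_left] at h
        exact h hne
      obtain ⟨ε1, hε1, h1⟩ := ihS u1 hu1 u2 hu2 hsupp1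
      by_cases hu2i : u2 i0 = 0
      · refine ⟨ε1, hε1, fun η hη0 hηε => ?_⟩
        refine ⟨_, h1 η hη0 hηε, v1, hv1, ?_⟩
        funext i
        refine Fin.addCases (fun i => ?_) (fun i => ?_) i
        · simp only [Fin.append_left]
        · simp only [Fin.append_right]
          rw [hu2i]; ring
      · have hu1i : 0 < u1 i0 :=
          lt_of_le_of_ne (hS.coords u1 hu1 i0).1 (Ne.symm (hsupp1 i0 hu2i))
        have hsupp2 : ∀ j, v2 j ≠ 0 → v1 j ≠ 0 := by
          intro j hne
          have h := hsupp (Fin.natAdd m j)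
          rw [Fin.append_right, Fin.append_right] at h
          have h' := h (mul_ne_zero hu2i hne)
          exact fun hv => h' (by rw [hv, mul_zero])
        obtain ⟨ε2, hε2, h2⟩ := ihT v1 hv1 v2 hv2 hsupp2
        have hu2le : u2 i0 ≤ 1 := (hS.coords u2 hu2 i0).2
        have hu2nn : 0 ≤ u2 i0 := (hS.coords u2 hu2 i0).1
        refine ⟨min ε1 (min (u1 i0 / 2) (ε2 * u1 i0 / 2)),
          lt_min hε1 (lt_min (by positivity) (by positivity)), fun η hη0 hηε => ?_⟩
        have hη1 : η ≤ ε1 := hηε.trans (min_le_left _ _)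
        have hη2 : η ≤ u1 i0 / 2 := hηε.trans ((min_le_right _ _).trans (min_le_left _ _))
        have hη3 : η ≤ ε2 * u1 i0 / 2 := hηε.trans ((min_le_right _ _).trans (min_le_right _ _))
        set c : ℝ := u1 i0 + η * (u1 i0 - u2 i0) with hc
        have hcpos : u1 i0 / 2 ≤ c := by
          have : η * u2 i0 ≤ η := by nlinarith
          nlinarith
        have hc0 : 0 < c := lt_of_lt_of_le (by positivity) hcpos
        set δ : ℝ := η * u2 i0 / c with hδ
        have hδ0 : 0 ≤ δ := by positivity
        have hδε2 : δ ≤ ε2 := by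
          rw [hδ, div_le_iff₀ hc0]
          calc η * u2 i0 ≤ η := by nlinarith
            _ ≤ ε2 * (u1 i0 / 2) := by linarith
            _ ≤ ε2 * c := by nlinarith
        refine ⟨_, h1 η hη0 hη1, _, h2 δ hδ0 hδε2, ?_⟩
        funext i
        refine Fin.addCases (fun i => ?_) (fun i => ?_) i
        · simp only [Fin.append_left]
        · simp only [Fin.append_right]
          have hcne' : u1 i0 + η * (u1 i0 - u2 i0) ≠ 0 := by
            rw [← hc]; exact ne_of_gt hc0
          rw [hδ, hc]
          field_simp
          ring


lemma dotp_add_right {n : ℕ} (a b c : Fin n → ℝ) : dotp a (b + c) = dotp a b + dotp a c := by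
  simp [dotp, mul_add, Finset.sum_add_distrib]

lemma dotp_smul_right {n : ℕ} (t : ℝ) (a b : Fin n → ℝ) : dotp a (t • b) = t * dotp a b := by
  simp [dotp, Finset.mul_sum, mul_assoc]; ring_nf; simp [mul_comm, mul_assoc, mul_left_comm]

lemma dotp_zero_right {n : ℕ} (a : Fin n → ℝ) : dotp a 0 = 0 := by simp [dotp]

lemma continuous_dotp_left {n : ℕ} (c : Fin n → ℝ) : Continuous fun p => dotp p c := by
  unfold dotp
  exact continuous_finset_sum _ fun i _ => (continuous_apply i).mul continuous_const

lemma continuous_dotp_right {n : ℕ} (a : Fin n → ℝ) : Continuous fun p => dotp a p := by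
  unfold dotp
  exact continuous_finset_sum _ fun i _ => continuous_const.mul (continuous_apply i)

lemma continuous_payoff {M N : ℕ} (G : Matrix (Fin M) (Fin N) ℝ) (a : Fin M → ℝ) :
    Continuous fun y => dotp a (G.mulVec y) := by
  have h : (fun y => dotp a (G.mulVec y)) = fun y => dotp y (G.transpose.mulVec a) := by
    funext y; rw [dotp_transpose]
  rw [h]; exact continuous_dotp_left _

lemma continuous_mulVec {M N : ℕ} (G : Matrix (Fin M) (Fin N) ℝ) :
    Continuous fun y : Fin N → ℝ => G.mulVec y := by
  refine continuous_pi fun i => ?_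
  unfold Matrix.mulVec dotProduct
  exact continuous_finset_sum _ fun j _ => continuous_const.mul (continuous_apply j)

lemma payoff_le_maxPayoff {M N : ℕ} (G : Matrix (Fin M) (Fin N) ℝ) {Y : Set (Fin N → ℝ)}
    (hYcp : IsCompact Y) (x : Fin M → ℝ) {y : Fin N → ℝ} (hy : y ∈ Y) :
    dotp x (G.mulVec y) ≤ maxPayoff G Y x :=
  le_csSup (hYcp.image (continuous_payoff G x)).bddAbove ⟨y, hy, rfl⟩

lemma exists_maxPayoff_eq {M N : ℕ} (G : Matrix (Fin M) (Fin N) ℝ) {Y : Set (Fin N → ℝ)}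
    (hYcp : IsCompact Y) (hYne : Y.Nonempty) (x : Fin M → ℝ) :
    ∃ y ∈ Y, dotp x (G.mulVec y) = maxPayoff G Y x := by
  obtain ⟨y0, hy0, hmax⟩ := hYcp.exists_isMaxOn hYne (continuous_payoff G x).continuousOn
  refine ⟨y0, hy0, le_antisymm (payoff_le_maxPayoff G hYcp x hy0) ?_⟩
  refine csSup_le ⟨_, ⟨y0, hy0, rfl⟩⟩ ?_
  rintro _ ⟨y, hy, rfl⟩
  exact hmax hy

lemma minPayoff_le_payoff {M N : ℕ} (G : Matrix (Fin M) (Fin N) ℝ) {X : Set (Fin M → ℝ)}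
    (hXcp : IsCompact X) (y : Fin N → ℝ) {x : Fin M → ℝ} (hx : x ∈ X) :
    minPayoff G X y ≤ dotp x (G.mulVec y) :=
  csInf_le (hXcp.image (continuous_dotp_left (G.mulVec y))).bddBelow ⟨x, hx, rfl⟩

lemma le_minPayoff {M N : ℕ} (G : Matrix (Fin M) (Fin N) ℝ) {X : Set (Fin M → ℝ)}
    (hXne : X.Nonempty) (y : Fin N → ℝ) {c : ℝ} (hc : ∀ x ∈ X, c ≤ dotp x (G.mulVec y)) :
    c ≤ minPayoff G X y := by
  refine le_csInf (hXne.image _) ?_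
  rintro _ ⟨x, hx, rfl⟩
  exact hc x hx

lemma clm_eq_dotp {n : ℕ} (f : (Fin n → ℝ) →L[ℝ] ℝ) (w : Fin n → ℝ) :
    f w = dotp w (fun j => f (Pi.single j 1)) := by
  have hw : ∑ j, w j • (Pi.single j (1:ℝ) : Fin n → ℝ) = w := by
    funext x
    rw [Finset.sum_apply]
    simp [Pi.single_apply]
  conv_lhs => rw [← hw]
  rw [map_sum]
  unfold dotp
  refine Finset.sum_congr rfl fun j _ => ?_
  rw [f.map_smul, smul_eq_mul]

theorem minimax_aux {M N : ℕ} (G : Matrix (Fin M) (Fin N) ℝ)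
    {X : Set (Fin M → ℝ)} {Y : Set (Fin N → ℝ)}
    (hXcv : Convex ℝ X) (hYcv : Convex ℝ Y) (hYcp : IsCompact Y) (hYne : Y.Nonempty)
    {xs : Fin M → ℝ} (hxsX : xs ∈ X)
    (hopt : ∀ x ∈ X, maxPayoff G Y xs ≤ maxPayoff G Y x) :
    ∃ y₀ ∈ Y, ∀ x ∈ X, maxPayoff G Y xs ≤ dotp x (G.mulVec y₀) := by
  set v := maxPayoff G Y xs with hv
  set Ymax : Set (Fin N → ℝ) := Y ∩ {y | dotp xs (G.mulVec y) = v} with hYmax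
  have hYmaxne : Ymax.Nonempty := by
    obtain ⟨y0, hy0, heq⟩ := exists_maxPayoff_eq G hYcp hYne xs
    exact ⟨y0, hy0, heq⟩
  have hYmaxcp : IsCompact Ymax :=
    hYcp.inter_right (isClosed_eq (continuous_payoff G xs) continuous_const)
  have hYmaxcv : Convex ℝ Ymax := by
    refine hYcv.inter ?_
    intro y1 h1 y2 h2 a b ha hb hab
    show dotp xs (G.mulVec (a • y1 + b • y2)) = v
    rw [Matrix.mulVec_add, Matrix.mulVec_smul, Matrix.mulVec_smul, dotp_add_right,
      dotp_smul_right, dotp_smul_right, h1, h2]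
    calc a * v + b * v = (a + b) * v := by ring
      _ = v := by rw [hab, one_mul]
  set K : Set (Fin M → ℝ) := (fun y => G.mulVec y) '' Ymax with hK
  have hKne : K.Nonempty := hYmaxne.image _
  have hKcp : IsCompact K := hYmaxcp.image (continuous_mulVec G)
  have hKcv : Convex ℝ K := by
    have h1 : Convex ℝ (⇑G.mulVecLin '' Ymax) := hYmaxcv.linear_image _
    have h2 : ⇑G.mulVecLin = fun y => G.mulVec y := funext fun y => G.mulVecLin_apply y
    rwa [h2] at h1
  -- main claim
  have claim : ∃ k ∈ K, ∀ x ∈ X, 0 ≤ dotp (x - xs) k := by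
    by_contra hcon
    push_neg at hcon
    set P : Set (Fin M → ℝ) := {p | ∀ x ∈ X, 0 ≤ dotp (x - xs) p} with hP
    have hPclosed : IsClosed P := by
      have : P = ⋂ x ∈ X, {p | 0 ≤ dotp (x - xs) p} := by
        ext p; simp [hP, Set.mem_iInter]
      rw [this]
      exact isClosed_biInter fun x _ => isClosed_le continuous_const (continuous_dotp_right _)
    have hPconv : Convex ℝ P := by
      intro p hp q hq a b ha hb _
      intro x hx
      rw [dotp_add_right, dotp_smul_right, dotp_smul_right]
      exact add_nonneg (mul_nonneg ha (hp x hx)) (mul_nonneg hb (hq x hx))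
    have hPscale : ∀ p ∈ P, ∀ c : ℝ, 0 ≤ c → c • p ∈ P := by
      intro p hp c hc x hx
      rw [dotp_smul_right]
      exact mul_nonneg hc (hp x hx)
    have hdisj : Disjoint K P := by
      rw [Set.disjoint_left]
      intro k hk hkP
      obtain ⟨x, hx, hlt⟩ := hcon k hk
      exact absurd (hkP x hx) (not_le.2 hlt)
    obtain ⟨f, u, u', hfK, huu', hfP⟩ :=
      geometric_hahn_banach_compact_closed hKcv hKcp hPconv hPclosed hdisj
    have h0P : (0 : Fin M → ℝ) ∈ P := fun x hx => by rw [dotp_zero_right]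
    have hu'0 : u' < 0 := by have := hfP 0 h0P; rwa [map_zero] at this
    have hfPnn : ∀ p ∈ P, 0 ≤ f p := by
      intro p hp
      by_contra hneg
      push_neg at hneg
      have hc : (0:ℝ) ≤ u' / f p := div_nonneg_of_nonpos (le_of_lt hu'0) (le_of_lt hneg)
      have := hfP _ (hPscale p hp _ hc)
      rw [f.map_smul, smul_eq_mul, div_mul_cancel₀ _ (ne_of_lt hneg)] at this
      exact lt_irrefl _ this
    set d : Fin M → ℝ := fun j => f (Pi.single j 1) with hd
    have hfd : ∀ w, f w = dotp w d := fun w => clm_eq_dotp f w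
    have hdK : ∀ k ∈ K, dotp d k < u := by
      intro k hk
      have := hfK k hk
      rwa [hfd, dotp_comm] at this
    have hu0 : u < 0 := lt_trans huu' hu'0
    have hdP : ∀ p ∈ P, 0 ≤ dotp p d := fun p hp => (hfd p) ▸ hfPnn p hp
    -- the cone generated by X - xs
    set C : Set (Fin M → ℝ) := {w | ∃ t : ℝ, 0 ≤ t ∧ ∃ x ∈ X, w = t • (x - xs)} with hC
    have h0C : (0 : Fin M → ℝ) ∈ C := ⟨0, le_refl 0, xs, hxsX, by rw [zero_smul]⟩
    have hCconv : Convex ℝ C := by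
      rintro w1 ⟨t1, ht1, x1, hx1, rfl⟩ w2 ⟨t2, ht2, x2, hx2, rfl⟩ a b ha hb hab
      rcases eq_or_lt_of_le (add_nonneg (mul_nonneg ha ht1) (mul_nonneg hb ht2)) with hr | hr
      · refine ⟨0, le_refl 0, xs, hxsX, ?_⟩
        have h1 : a * t1 = 0 := by nlinarith [mul_nonneg ha ht1, mul_nonneg hb ht2]
        have h2 : b * t2 = 0 := by nlinarith [mul_nonneg ha ht1, mul_nonneg hb ht2]
        rw [zero_smul, smul_smul, smul_smul] at *
        rw [h1, h2, zero_smul, zero_smul, add_zero]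
      · set r : ℝ := a * t1 + b * t2 with hr'
        refine ⟨r, le_of_lt hr, (a * t1 / r) • x1 + (b * t2 / r) • x2, ?_, ?_⟩
        · refine hXcv hx1 hx2 (by positivity) (by positivity) ?_
          field_simp
          exact hr'.symm
        · funext i
          simp only [Pi.add_apply, Pi.smul_apply, Pi.sub_apply, smul_eq_mul]
          have hrne : r ≠ 0 := ne_of_gt hr
          field_simp
          ring
    have hdC : d ∈ closure C := by
      by_contra hdc
      have hdisj2 : Disjoint {d} (closure C) := by
        rw [Set.disjoint_left]
        rintro a rfl
        exact hdc
      obtain ⟨g, s, t, hgd, hst, hgC⟩ :=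
        geometric_hahn_banach_compact_closed (convex_singleton d) isCompact_singleton
          (hCconv.closure) isClosed_closure hdisj2
      have ht0 : t < 0 := by
        have := hgC 0 (subset_closure h0C)
        rwa [map_zero] at this
      have hgCnn : ∀ w ∈ C, 0 ≤ g w := by
        intro w hw
        by_contra hneg
        push_neg at hneg
        have hCscale : ∀ c : ℝ, 0 ≤ c → c • w ∈ C := by
          obtain ⟨t1, ht1, x1, hx1, rfl⟩ := hw
          intro c hc
          exact ⟨c * t1, mul_nonneg hc ht1, x1, hx1, by rw [smul_smul]⟩
        have hc : (0:ℝ) ≤ t / g w := div_nonneg_of_nonpos (le_of_lt ht0) (le_of_lt hneg)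
        have := hgC _ (subset_closure (hCscale _ hc))
        rw [g.map_smul, smul_eq_mul, div_mul_cancel₀ _ (ne_of_lt hneg)] at this
        exact lt_irrefl _ this
      set e : Fin M → ℝ := fun j => g (Pi.single j 1) with he
      have hge : ∀ w, g w = dotp w e := fun w => clm_eq_dotp g w
      have heP : e ∈ P := by
        intro x hx
        have := hgCnn (x - xs) ⟨1, zero_le_one, x, hx, (one_smul _ _).symm⟩
        rwa [hge] at this
      have h1 : 0 ≤ dotp e d := hdP e heP
      have h2 : dotp d e < s := by have := hgd d rfl; rwa [hge] at this
      rw [dotp_comm] at h1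
      linarith
    -- bound on K
    obtain ⟨kb, hkb, hkbmax⟩ := hKcp.exists_isMaxOn hKne
      (continuous_finset_sum (Finset.univ) fun (i : Fin M) _ =>
        (continuous_apply i).abs).continuousOn
    set R : ℝ := norm1 kb with hR
    have hRnn : 0 ≤ R := norm1_nonneg kb
    have hnormK : ∀ k ∈ K, norm1 k ≤ R := fun k hk => hkbmax hk
    -- pick w in C close to d
    have hε : 0 < -u / (R + 1) := div_pos (by linarith) (by linarith)
    obtain ⟨w, hwC, hwd⟩ := Metric.mem_closure_iff.1 hdC _ hε
    have hwneg : ∀ k ∈ K, dotp w k < 0 := by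
      intro k hk
      have hsplit : dotp w k = dotp d k + dotp (w - d) k := by
        rw [← dotp_add_left]; congr 1; funext i; simp
      have hbound : dotp (w - d) k ≤ dist d w * norm1 k := by
        calc dotp (w - d) k ≤ |dotp (w - d) k| := le_abs_self _
          _ ≤ ∑ i, |(w - d) i| * |k i| := by
              unfold dotp
              refine (Finset.abs_sum_le_sum_abs _ _).trans ?_
              refine Finset.sum_le_sum fun i _ => ?_
              rw [abs_mul]
          _ ≤ ∑ i, dist d w * |k i| := by
              refine Finset.sum_le_sum fun i _ => ?_
              refine mul_le_mul_of_nonneg_right ?_ (abs_nonneg _)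
              have := dist_le_pi_dist w d i
              rw [Real.dist_eq] at this
              calc |(w - d) i| = |w i - d i| := by simp
                _ ≤ dist w d := this
                _ = dist d w := dist_comm w d
          _ = dist d w * norm1 k := by rw [norm1, ← Finset.mul_sum]
      have : dotp w k ≤ u + dist d w * norm1 k := by
        have := hdK k hk
        linarith [hsplit ▸ (add_le_add (le_of_lt this) hbound)]
      have h2 : dist d w * norm1 k ≤ (-u / (R + 1)) * R := by
        refine mul_le_mul (le_of_lt hwd) (hnormK k hk) (norm1_nonneg k) (le_of_lt hε)
      have h3 : u + (-u / (R + 1)) * R < 0 := by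
        have hR1 : (0:ℝ) < R + 1 := by linarith
        have h4 : -u / (R + 1) * R < -u := by
          rw [div_mul_eq_mul_div, div_lt_iff₀ hR1]
          nlinarith
        linarith
      linarith
    -- extract direction
    obtain ⟨t0, ht0, xh, hxh, rfl⟩ := hwC
    have ht0pos : 0 < t0 := by
      obtain ⟨k0, hk0⟩ := hKne
      have := hwneg k0 hk0
      rw [dotp_smul_left] at this
      rcases lt_or_eq_of_le ht0 with h | h
      · exact h
      · exfalso; rw [← h, zero_mul] at this; exact lt_irrefl _ this
    have hdirneg : ∀ k ∈ K, dotp (xh - xs) k < 0 := by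
      intro k hk
      have := hwneg k hk
      rw [dotp_smul_left] at this
      nlinarith
    -- Danskin argument
    have hstep : ∀ n : ℕ, ∃ y ∈ Y,
        dotp (xs + (1 / (n+1 : ℝ)) • (xh - xs)) (G.mulVec y)
          = maxPayoff G Y (xs + (1 / (n+1 : ℝ)) • (xh - xs)) :=
      fun n => exists_maxPayoff_eq G hYcp hYne _
    choose yseq hyseqY hyseqmax using hstep
    have hsn : ∀ n : ℕ, (0:ℝ) < 1 / (n+1 : ℝ) := fun n => by positivity
    have hsn1 : ∀ n : ℕ, (1 / (n+1 : ℝ)) ≤ 1 := fun n => by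
      rw [div_le_one (by positivity)]; push_cast; linarith [Nat.cast_nonneg (α := ℝ) n]
    have hmemX : ∀ n : ℕ, xs + (1 / (n+1 : ℝ)) • (xh - xs) ∈ X := by
      intro n
      have heq : xs + (1 / (n+1 : ℝ)) • (xh - xs)
          = (1 - 1 / (n+1 : ℝ)) • xs + (1 / (n+1 : ℝ)) • xh := by
        funext i; simp only [Pi.add_apply, Pi.smul_apply, Pi.sub_apply, smul_eq_mul]; ring
      rw [heq]
      exact hXcv hxsX hxh (by linarith [hsn1 n]) (le_of_lt (hsn n)) (by ring)
    have hge : ∀ n : ℕ, v ≤ dotp xs (G.mulVec (yseq n))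
        + (1 / (n+1 : ℝ)) * dotp (xh - xs) (G.mulVec (yseq n)) := by
      intro n
      have h1 := hopt _ (hmemX n)
      rw [← hyseqmax n] at h1
      rw [dotp_add_left, dotp_smul_left] at h1
      exact h1
    have hle : ∀ n : ℕ, dotp xs (G.mulVec (yseq n)) ≤ v :=
      fun n => payoff_le_maxPayoff G hYcp xs (hyseqY n)
    have hbnn : ∀ n : ℕ, 0 ≤ dotp (xh - xs) (G.mulVec (yseq n)) := by
      intro n
      have h1 := hge n
      have h2 := hle n
      nlinarith [hsn n]
    obtain ⟨yb, hyb, hsub⟩ := hYcp.tendsto_subseq hyseqY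
    obtain ⟨φ, hφmono, hφtend⟩ := hsub
    have hcont : Continuous fun y => dotp (xh - xs) (G.mulVec y) := continuous_payoff G _
    have hlim : Tendsto (fun n => dotp (xh - xs) (G.mulVec (yseq (φ n)))) atTop
        (𝓝 (dotp (xh - xs) (G.mulVec yb))) := (hcont.tendsto yb).comp hφtend
    have hlimnn : 0 ≤ dotp (xh - xs) (G.mulVec yb) :=
      ge_of_tendsto hlim (Filter.Eventually.of_forall fun n => hbnn (φ n))
    -- yb ∈ Ymax
    have hcont2 : Continuous fun y => dotp xs (G.mulVec y) := continuous_payoff G xs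
    have hlim2 : Tendsto (fun n => dotp xs (G.mulVec (yseq (φ n)))) atTop
        (𝓝 (dotp xs (G.mulVec yb))) := (hcont2.tendsto yb).comp hφtend
    have hBb : ∃ Bb : ℝ, ∀ n, dotp (xh - xs) (G.mulVec (yseq n)) ≤ Bb := by
      obtain ⟨ybb, hybb, hmax⟩ := hYcp.exists_isMaxOn hYne hcont.continuousOn
      exact ⟨_, fun n => hmax (hyseqY n)⟩
    obtain ⟨Bb, hBb⟩ := hBb
    have hanlb : ∀ n : ℕ, v - (1 / (n+1 : ℝ)) * Bb ≤ dotp xs (G.mulVec (yseq n)) := by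
      intro n
      have h1 := hge n
      have h2 := hBb n
      nlinarith [hsn n]
    have htendv : Tendsto (fun n : ℕ => v - (1 / (φ n + 1 : ℝ)) * Bb) atTop (𝓝 v) := by
      have h0 : Tendsto (fun n : ℕ => 1 / (n + 1 : ℝ)) atTop (𝓝 0) :=
        tendsto_one_div_add_atTop_nhds_zero_nat
      have h1 : Tendsto (fun n : ℕ => 1 / (φ n + 1 : ℝ)) atTop (𝓝 0) :=
        h0.comp hφmono.tendsto_atTop
      have h2 : Tendsto (fun n : ℕ => (1 / (φ n + 1 : ℝ)) * Bb) atTop (𝓝 0) := by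
        simpa using h1.mul_const Bb
      have h3 : Tendsto (fun _ : ℕ => v) atTop (𝓝 v) := tendsto_const_nhds
      simpa using h3.sub h2
    have hyblb : v ≤ dotp xs (G.mulVec yb) :=
      le_of_tendsto_of_tendsto' htendv hlim2 fun n => hanlb (φ n)
    have hybub : dotp xs (G.mulVec yb) ≤ v :=
      le_of_tendsto hlim2 (Filter.Eventually.of_forall fun n => hle (φ n))
    have hybmax : yb ∈ Ymax := ⟨hyb, le_antisymm hybub hyblb⟩
    have hkmem : G.mulVec yb ∈ K := ⟨yb, hybmax, rfl⟩
    exact absurd hlimnn (not_le.2 (hdirneg _ hkmem))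
  obtain ⟨k, hkK, hknn⟩ := claim
  obtain ⟨y₀, hy₀max, rfl⟩ := hkK
  refine ⟨y₀, hy₀max.1, fun x hx => ?_⟩
  have h1 := hknn x hx
  rw [dotp_sub_left] at h1
  have h2 : dotp xs (G.mulVec y₀) = v := hy₀max.2
  linarith


lemma norm1_le_card {n : ℕ} {y : Fin n → ℝ} (h : ∀ i, 0 ≤ y i ∧ y i ≤ 1) :
    norm1 y ≤ n := by
  unfold norm1
  calc ∑ i, |y i| ≤ ∑ _i : Fin n, (1:ℝ) :=
        Finset.sum_le_sum fun i _ => by rw [abs_of_nonneg (h i).1]; exact (h i).2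
    _ = n := by simp

lemma fop_identity {M N : ℕ} (G : Matrix (Fin M) (Fin N) ℝ) (z : Pt M N)
    (x' : Fin M → ℝ) (y' : Fin N → ℝ) :
    dotPt (Fop G z) (z - (x', y'))
      = dotp z.1 (G.mulVec y') - dotp x' (G.mulVec z.2) := by
  have h0 : dotPt (Fop G z) (z - (x', y'))
      = dotp (G.mulVec z.2) (z.1 - x') + dotp (-(G.transpose.mulVec z.1)) (z.2 - y') := rfl
  have h1 : dotp (G.mulVec z.2) (z.1 - x')
      = dotp z.1 (G.mulVec z.2) - dotp x' (G.mulVec z.2) := by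
    rw [dotp_comm, dotp_sub_left]
  have h2 : dotp (G.transpose.mulVec z.1) (z.2 - y')
      = dotp z.1 (G.mulVec z.2) - dotp z.1 (G.mulVec y') := by
    rw [dotp_comm, dotp_transpose, mulVec_sub, dotp_sub_right]
  rw [h0, dotp_neg_left, h1, h2]
  ring

/-- Lemma 15': equilibrium margin inequality.  Under the
unique-Nash-equilibrium assumption, with `C = min{c_x, c_y}`, every `z ∈ Z = X × Y`
satisfies `max_{z' ∈ V*(Z)} F(z)ᵀ(z − z') ≥ C ‖z* − z‖₁`, where
`V*(Z) = V*(X) × V*(Y)`. -/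
theorem margin_inequality {M N : ℕ}
    (G : Matrix (Fin M) (Fin N) ℝ) (hG : ∀ i j, |G i j| ≤ 1)
    (X : Set (Fin M → ℝ)) (Y : Set (Fin N → ℝ))
    (hX : IsTreeplex X) (hY : IsTreeplex Y)
    (xs : Fin M → ℝ) (ys : Fin N → ℝ)
    (hXs : Xstar G X Y = {xs}) (hYs : Ystar G X Y = {ys}) :
    ∀ z ∈ X ×ˢ Y,
      min (cx G X Y xs ys) (cy G X Y xs ys) * norm1Pt ((xs, ys) - z) ≤
        sSup ((fun z' => dotPt (Fop G z) (z - z')) ''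
          (suppSubset X xs ×ˢ suppSubset Y ys)) := by
  -- unpack equilibrium membership
  have hxsStar : xs ∈ Xstar G X Y := by rw [hXs]; exact rfl
  have hysStar : ys ∈ Ystar G X Y := by rw [hYs]; exact rfl
  obtain ⟨hxsX, hxsopt⟩ := hxsStar
  obtain ⟨hysY, hysopt⟩ := hysStar
  -- treeplex facts
  have hXcv := hX.convex
  have hYcv := hY.convex
  have hXcp := hX.isCompact
  have hYcp := hY.isCompact
  have hXne := hX.nonempty
  have hYne := hY.nonempty
  set v := maxPayoff G Y xs with hvdef
  -- minimax
  obtain ⟨y₀, hy₀Y, hy₀⟩ := minimax_aux G hXcv hYcv hYcp hYne hxsX hxsopt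
  have hminy₀ : v ≤ minPayoff G X y₀ := le_minPayoff G hXne y₀ hy₀
  have hminys : v ≤ minPayoff G X ys := hminy₀.trans (hysopt y₀ hy₀Y)
  have hv1 : dotp xs (G.mulVec ys) = v := by
    refine le_antisymm (payoff_le_maxPayoff G hYcp xs hysY) ?_
    exact hminys.trans (minPayoff_le_payoff G hXcp ys hxsX)
  have hminys' : minPayoff G X ys = v :=
    le_antisymm ((minPayoff_le_payoff G hXcp ys hxsX).trans hv1.le) hminys
  -- complementary slackness
  have hCSy : ∀ y' ∈ suppSubset Y ys, v ≤ dotp xs (G.mulVec y') := by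
    rintro y' ⟨hy'Y, hy'supp⟩
    obtain ⟨ε, hε, hpert⟩ := hY.perturb ys hysY y' hy'Y hy'supp
    have hwY := hpert ε (le_of_lt hε) (le_refl ε)
    have hw : (fun i => ys i + ε * (ys i - y' i)) = ys + ε • (ys - y') := by
      funext i; simp only [Pi.add_apply, Pi.smul_apply, Pi.sub_apply, smul_eq_mul]
    rw [hw] at hwY
    have hle := payoff_le_maxPayoff G hYcp xs hwY
    rw [Matrix.mulVec_add, Matrix.mulVec_smul, dotp_add_right, dotp_smul_right,
      mulVec_sub, dotp_sub_right, hv1] at hle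
    nlinarith
  have hCSx : ∀ x' ∈ suppSubset X xs, dotp x' (G.mulVec ys) ≤ v := by
    rintro x' ⟨hx'X, hx'supp⟩
    obtain ⟨ε, hε, hpert⟩ := hX.perturb xs hxsX x' hx'X hx'supp
    have hwX := hpert ε (le_of_lt hε) (le_refl ε)
    have hw : (fun i => xs i + ε * (xs i - x' i)) = xs + ε • (xs - x') := by
      funext i; simp only [Pi.add_apply, Pi.smul_apply, Pi.sub_apply, smul_eq_mul]
    rw [hw] at hwX
    have hle := minPayoff_le_payoff G hXcp ys hwX
    rw [hminys', dotp_add_left, dotp_smul_left, dotp_sub_left, hv1] at hle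
    nlinarith
  -- main inequality
  intro z hz
  obtain ⟨hzX, hzY⟩ := hz
  have hxsV : xs ∈ suppSubset X xs := ⟨hxsX, fun _ h => h⟩
  have hysV : ys ∈ suppSubset Y ys := ⟨hysY, fun _ h => h⟩
  set A : Set ℝ := (fun y' => dotp (z.1 - xs) (G.mulVec y')) '' suppSubset Y ys with hAdef
  set B : Set ℝ := (fun x' => dotp x' (G.mulVec (ys - z.2))) '' suppSubset X xs with hBdef
  set S : Set ℝ := (fun z' => dotPt (Fop G z) (z - z')) ''
    (suppSubset X xs ×ˢ suppSubset Y ys) with hSdef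
  have hAne : A.Nonempty := ⟨_, ys, hysV, rfl⟩
  have hBne : B.Nonempty := ⟨_, xs, hxsV, rfl⟩
  have hSne : S.Nonempty := ⟨_, (xs, ys), ⟨hxsV, hysV⟩, rfl⟩
  -- norm bounds
  have hn1x : norm1 z.1 ≤ M := norm1_le_card (hX.coords z.1 hzX)
  have hn1y : norm1 z.2 ≤ N := norm1_le_card (hY.coords z.2 hzY)
  have hn1xs : norm1 xs ≤ M := norm1_le_card (hX.coords xs hxsX)
  have hn1ys : norm1 ys ≤ N := norm1_le_card (hY.coords ys hysY)
  have hAbdd : BddAbove A := by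
    refine ⟨norm1 (z.1 - xs) * N, ?_⟩
    rintro _ ⟨y', hy', rfl⟩
    have h1 := abs_dotp_mulVec_le hG (z.1 - xs) y'
    have h2 : norm1 y' ≤ N := norm1_le_card (hY.coords y' hy'.1)
    have h3 := le_abs_self (dotp (z.1 - xs) (G.mulVec y'))
    nlinarith [norm1_nonneg (z.1 - xs), norm1_nonneg y']
  have hBbdd : BddAbove B := by
    refine ⟨(M : ℝ) * norm1 (ys - z.2), ?_⟩
    rintro _ ⟨x', hx', rfl⟩
    have h1 := abs_dotp_mulVec_le hG x' (ys - z.2)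
    have h2 : norm1 x' ≤ M := norm1_le_card (hX.coords x' hx'.1)
    have h3 := le_abs_self (dotp x' (G.mulVec (ys - z.2)))
    nlinarith [norm1_nonneg x', norm1_nonneg (ys - z.2)]
  have hSbdd : BddAbove S := by
    refine ⟨(M : ℝ) * N + M * N, ?_⟩
    rintro _ ⟨⟨x', y'⟩, ⟨hx', hy'⟩, rfl⟩
    show dotPt (Fop G z) (z - (x', y')) ≤ (M : ℝ) * N + M * N
    rw [fop_identity]
    have h1 := abs_dotp_mulVec_le hG z.1 y'
    have h2 := abs_dotp_mulVec_le hG x' (z.2)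
    have h3 : norm1 y' ≤ N := norm1_le_card (hY.coords y' hy'.1)
    have h4 : norm1 x' ≤ M := norm1_le_card (hX.coords x' hx'.1)
    have h5 := le_abs_self (dotp z.1 (G.mulVec y'))
    have h6 := neg_abs_le (dotp x' (G.mulVec z.2))
    nlinarith [norm1_nonneg z.1, norm1_nonneg y', norm1_nonneg x', norm1_nonneg z.2]
  -- every α+β is below sSup S
  have key : ∀ α ∈ A, ∀ β ∈ B, α + β ≤ sSup S := by
    rintro _ ⟨y', hy', rfl⟩ _ ⟨x', hx', rfl⟩
    have hmem : dotPt (Fop G z) (z - (x', y')) ∈ S := ⟨(x', y'), ⟨hx', hy'⟩, rfl⟩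
    have hid := fop_identity G z x' y'
    have hsplit : dotp z.1 (G.mulVec y') - dotp x' (G.mulVec z.2)
        = dotp (z.1 - xs) (G.mulVec y') + dotp x' (G.mulVec (ys - z.2))
          + (dotp xs (G.mulVec y') - dotp x' (G.mulVec ys)) := by
      rw [dotp_sub_left, mulVec_sub, dotp_sub_right]
      ring
    have hbr : 0 ≤ dotp xs (G.mulVec y') - dotp x' (G.mulVec ys) := by
      have := hCSy y' hy'
      have := hCSx x' hx'
      linarith
    have := le_csSup hSbdd hmem
    rw [hid, hsplit] at this
    linarith
  have hsum : sSup A + sSup B ≤ sSup S := by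
    have h1 : sSup A ≤ sSup S - sSup B := by
      refine csSup_le hAne fun α hα => ?_
      have h2 : sSup B ≤ sSup S - α := csSup_le hBne fun β hβ => by linarith [key α hα β hβ]
      linarith
    linarith
  -- relate to cx, cy
  set Cm : ℝ := min (cx G X Y xs ys) (cy G X Y xs ys) with hCm
  have hcxbdd : BddBelow ((fun x => cxVal G Y xs ys x) '' {x ∈ X | x ≠ xs}) := by
    refine ⟨-(N : ℝ), ?_⟩
    rintro _ ⟨x'', ⟨hx''X, hx''ne⟩, rfl⟩
    have hn : 0 < norm1 (x'' - xs) := norm1_pos_of_ne hx''ne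
    have helem : -(norm1 (x'' - xs) * N) ≤ dotp (x'' - xs) (G.mulVec ys) := by
      have h1 := abs_dotp_mulVec_le hG (x'' - xs) ys
      have h2 := neg_abs_le (dotp (x'' - xs) (G.mulVec ys))
      nlinarith [norm1_nonneg (x'' - xs)]
    have hbdd2 : BddAbove ((fun y => dotp (x'' - xs) (G.mulVec y)) '' suppSubset Y ys) := by
      refine ⟨norm1 (x'' - xs) * N, ?_⟩
      rintro _ ⟨y', hy', rfl⟩
      have h1 := abs_dotp_mulVec_le hG (x'' - xs) y'
      have h2 : norm1 y' ≤ N := norm1_le_card (hY.coords y' hy'.1)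
      have h3 := le_abs_self (dotp (x'' - xs) (G.mulVec y'))
      nlinarith [norm1_nonneg (x'' - xs), norm1_nonneg y']
    have hsup : -(norm1 (x'' - xs) * N)
        ≤ sSup ((fun y => dotp (x'' - xs) (G.mulVec y)) '' suppSubset Y ys) :=
      helem.trans (le_csSup hbdd2 ⟨ys, hysV, rfl⟩)
    show -(N : ℝ) ≤ cxVal G Y xs ys x''
    unfold cxVal
    rw [le_div_iff₀ hn]
    calc -(N : ℝ) * norm1 (x'' - xs) = -(norm1 (x'' - xs) * N) := by ring
      _ ≤ _ := hsup
  have hcybdd : BddBelow ((fun y => cyVal G X xs ys y) '' {y ∈ Y | y ≠ ys}) := by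
    refine ⟨-(M : ℝ), ?_⟩
    rintro _ ⟨y'', ⟨hy''Y, hy''ne⟩, rfl⟩
    have hn : 0 < norm1 (ys - y'') := by
      have := norm1_pos_of_ne (fun h => hy''ne h.symm : ys ≠ y'')
      exact this
    have helem : -((M : ℝ) * norm1 (ys - y'')) ≤ dotp xs (G.mulVec (ys - y'')) := by
      have h1 := abs_dotp_mulVec_le hG xs (ys - y'')
      have h2 := neg_abs_le (dotp xs (G.mulVec (ys - y'')))
      nlinarith [norm1_nonneg (ys - y'')]
    have hbdd2 : BddAbove ((fun x => dotp x (G.mulVec (ys - y''))) '' suppSubset X xs) := by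
      refine ⟨(M : ℝ) * norm1 (ys - y''), ?_⟩
      rintro _ ⟨x', hx', rfl⟩
      have h1 := abs_dotp_mulVec_le hG x' (ys - y'')
      have h2 : norm1 x' ≤ M := norm1_le_card (hX.coords x' hx'.1)
      have h3 := le_abs_self (dotp x' (G.mulVec (ys - y'')))
      nlinarith [norm1_nonneg x', norm1_nonneg (ys - y'')]
    have hsup : -((M : ℝ) * norm1 (ys - y''))
        ≤ sSup ((fun x => dotp x (G.mulVec (ys - y''))) '' suppSubset X xs) :=
      helem.trans (le_csSup hbdd2 ⟨xs, hxsV, rfl⟩)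
    show -(M : ℝ) ≤ cyVal G X xs ys y''
    unfold cyVal
    rw [le_div_iff₀ hn]
    calc -(M : ℝ) * norm1 (ys - y'') = -((M : ℝ) * norm1 (ys - y'')) := by ring
      _ ≤ _ := hsup
  have hA : Cm * norm1 (xs - z.1) ≤ sSup A := by
    by_cases hxx : z.1 = xs
    · have h0 : norm1 (xs - z.1) = 0 := by
        rw [hxx]; simp [norm1]
      rw [h0, mul_zero]
      have helem : (0:ℝ) ∈ A := by
        refine ⟨ys, hysV, ?_⟩
        show dotp (z.1 - xs) (G.mulVec ys) = 0
        rw [hxx, sub_self, dotp_zero_left]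
      exact le_csSup hAbdd helem
    · have hn : 0 < norm1 (z.1 - xs) := norm1_pos_of_ne hxx
      have hcx_le : cx G X Y xs ys ≤ cxVal G Y xs ys z.1 :=
        csInf_le hcxbdd ⟨z.1, ⟨hzX, hxx⟩, rfl⟩
      have hval : cxVal G Y xs ys z.1 = sSup A / norm1 (z.1 - xs) := rfl
      have h1 : cx G X Y xs ys * norm1 (z.1 - xs) ≤ sSup A := by
        have := mul_le_mul_of_nonneg_right hcx_le (le_of_lt hn)
        rwa [hval, div_mul_cancel₀ _ (ne_of_gt hn)] at this
      have h2 : Cm * norm1 (z.1 - xs) ≤ cx G X Y xs ys * norm1 (z.1 - xs) :=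
        mul_le_mul_of_nonneg_right (min_le_left _ _) (le_of_lt hn)
      rw [norm1_sub_comm]
      linarith
  have hB : Cm * norm1 (ys - z.2) ≤ sSup B := by
    by_cases hyy : z.2 = ys
    · have h0 : norm1 (ys - z.2) = 0 := by
        rw [hyy]; simp [norm1]
      rw [h0, mul_zero]
      have helem : (0:ℝ) ∈ B := by
        refine ⟨xs, hxsV, ?_⟩
        show dotp xs (G.mulVec (ys - z.2)) = 0
        rw [hyy, sub_self, Matrix.mulVec_zero, dotp_zero_right]
      exact le_csSup hBbdd helem
    · have hn : 0 < norm1 (ys - z.2) := norm1_pos_of_ne (fun h => hyy h.symm)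
      have hcy_le : cy G X Y xs ys ≤ cyVal G X xs ys z.2 :=
        csInf_le hcybdd ⟨z.2, ⟨hzY, hyy⟩, rfl⟩
      have hval : cyVal G X xs ys z.2 = sSup B / norm1 (ys - z.2) := rfl
      have h1 : cy G X Y xs ys * norm1 (ys - z.2) ≤ sSup B := by
        have := mul_le_mul_of_nonneg_right hcy_le (le_of_lt hn)
        rwa [hval, div_mul_cancel₀ _ (ne_of_gt hn)] at this
      have h2 : Cm * norm1 (ys - z.2) ≤ cy G X Y xs ys * norm1 (ys - z.2) :=
        mul_le_mul_of_nonneg_right (min_le_right _ _) (le_of_lt hn)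
      linarith
  have hfinal : norm1Pt ((xs, ys) - z) = norm1 (xs - z.1) + norm1 (ys - z.2) := rfl
  rw [hfinal, mul_add]
  linarith
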